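/- Let ρ be the spectral radius of the 6×6 integer matrix F_{1,1,1}, i.e., the maximum modulus of the complex roots of its characteristic polynomial. Then ρ is a real root of t⁴ − 14t³ + 24t² − 14t + 1 and satisfies 12 < ρ < 13. -/

import Mathlib

open Matrix

/-- Axis (0 = x, 1 = y, 2 = z) of a basis index `t ≥ 3` (curve classes):
indices `3,…,2+k` are `C_{x,i}`, indices `3+k,…,2+k+l` are `C_{y,i}`,
and the remaining indices are `C_{z,i}`. -/
def axOf (k l : ℕ) (t : ℕ) : ℕ :=
  if t < 3 + k then 0 else if t < 3 + k + l then 1 else 2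

/-- The matrix of `T_x` in the basis
`E_x, E_y, E_z, C_{x,1},…,C_{x,k}, C_{y,1},…,C_{y,l}, C_{z,1},…,C_{z,m}`:
`T_x` fixes `E_y`, `E_z` and each `C_{x,i}`, sends `C_{y,i} ↦ E_z − C_{y,i}`,
`C_{z,i} ↦ E_y − C_{z,i}`, and `E_x ↦ −E_x + 2E_y + 2E_z − (C_{x,1}+…+C_{x,k})`. -/
def Tx (k l m : ℕ) : Matrix (Fin (3 + k + l + m)) (Fin (3 + k + l + m)) ℤ :=
  fun i j =>
    if (j : ℕ) = 0 then
      if (i : ℕ) = 0 then -1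
      else if (i : ℕ) < 3 then 2
      else if axOf k l i = 0 then -1 else 0
    else if (j : ℕ) < 3 then (if i = j then 1 else 0)
    else if axOf k l j = 0 then (if i = j then 1 else 0)
    else if axOf k l j = 1 then (if (i : ℕ) = 2 then 1 else if i = j then -1 else 0)
    else (if (i : ℕ) = 1 then 1 else if i = j then -1 else 0)

/-- The matrix of `T_y`: it fixes `E_x`, `E_z` and each `C_{y,i}`, sends
`C_{x,i} ↦ E_z − C_{x,i}`, `C_{z,i} ↦ E_x − C_{z,i}`, and
`E_y ↦ 2E_x − E_y + 2E_z − (C_{y,1}+…+C_{y,l})`. -/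
def Ty (k l m : ℕ) : Matrix (Fin (3 + k + l + m)) (Fin (3 + k + l + m)) ℤ :=
  fun i j =>
    if (j : ℕ) = 1 then
      if (i : ℕ) = 1 then -1
      else if (i : ℕ) < 3 then 2
      else if axOf k l i = 1 then -1 else 0
    else if (j : ℕ) < 3 then (if i = j then 1 else 0)
    else if axOf k l j = 1 then (if i = j then 1 else 0)
    else if axOf k l j = 0 then (if (i : ℕ) = 2 then 1 else if i = j then -1 else 0)
    else (if (i : ℕ) = 0 then 1 else if i = j then -1 else 0)

/-- The matrix of `T_z`: it fixes `E_x`, `E_y` and each `C_{z,i}`, sends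
`C_{x,i} ↦ E_y − C_{x,i}`, `C_{y,i} ↦ E_x − C_{y,i}`, and
`E_z ↦ 2E_x + 2E_y − E_z − (C_{z,1}+…+C_{z,m})`. -/
def Tz (k l m : ℕ) : Matrix (Fin (3 + k + l + m)) (Fin (3 + k + l + m)) ℤ :=
  fun i j =>
    if (j : ℕ) = 2 then
      if (i : ℕ) = 2 then -1
      else if (i : ℕ) < 3 then 2
      else if axOf k l i = 2 then -1 else 0
    else if (j : ℕ) < 3 then (if i = j then 1 else 0)
    else if axOf k l j = 2 then (if i = j then 1 else 0)
    else if axOf k l j = 0 then (if (i : ℕ) = 1 then 1 else if i = j then -1 else 0)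
    else (if (i : ℕ) = 0 then 1 else if i = j then -1 else 0)

/-- The matrix of `F = T_z ∘ T_y ∘ T_x`. -/
def Fm (k l m : ℕ) : Matrix (Fin (3 + k + l + m)) (Fin (3 + k + l + m)) ℤ :=
  Tz k l m * Ty k l m * Tx k l m

/-- The characteristic polynomial (over `ℂ`) of the integer matrix `F_{k,l,m}`. -/
noncomputable def cpF (k l m : ℕ) : Polynomial ℂ :=
  Matrix.charpoly ((Fm k l m).map (fun x => (x : ℂ)))

open Polynomial

noncomputable abbrev McF : Matrix (Fin (3+1+1+1)) (Fin (3+1+1+1)) ℂ :=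
  (Fm 1 1 1).map (fun x => (x : ℂ))

lemma hannZ : (Fm 1 1 1)^6 + (23:ℤ) • (Fm 1 1 1)^4 + (14:ℤ) • (Fm 1 1 1) =
    (14:ℤ) • (Fm 1 1 1)^5 + (23:ℤ) • (Fm 1 1 1)^2 + 1 := by decide

lemma hannC : McF^6 + (23:ℤ) • McF^4 + (14:ℤ) • McF =
    (14:ℤ) • McF^5 + (23:ℤ) • McF^2 + 1 := by
  have h := congrArg (fun M => (Int.castRingHom ℂ).mapMatrix M) hannZ
  simp only [map_add, map_pow, map_zsmul, RingHom.mapMatrix_apply,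
    Int.coe_castRingHom] at h
  rw [Matrix.map_one _ Int.cast_zero Int.cast_one] at h
  exact h

lemma trace_McF : McF.trace = 14 := by
  have h : (Fm 1 1 1).trace = 14 := by decide
  have h2 := AddMonoidHom.map_trace (Int.castRingHom ℂ) (Fm 1 1 1)
  rw [h] at h2
  have h3 : (Fm 1 1 1).map ⇑(Int.castRingHom ℂ) = McF := rfl
  rw [h3] at h2
  exact_mod_cast h2.symm

lemma eval_charpoly_gen {n : Type*} [Fintype n] [DecidableEq n]
    (M : Matrix n n ℂ) (z : ℂ) :
    (M.charpoly).eval z = (z • (1 : Matrix n n ℂ) - M).det := by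
  have h1 := RingHom.map_det (Polynomial.evalRingHom z) (Matrix.charmatrix M)
  rw [RingHom.mapMatrix_apply] at h1
  have h2 : (Matrix.charmatrix M).map (Polynomial.evalRingHom z)
      = z • (1 : Matrix n n ℂ) - M := by
    ext i j
    by_cases h : i = j
    · subst h
      simp [Matrix.charmatrix_apply_eq, Matrix.one_apply_eq]
    · simp [Matrix.charmatrix_apply_ne _ _ _ h, Matrix.one_apply_ne h]
  rw [h2] at h1
  exact h1

lemma root_sextic {z : ℂ} (hz : (cpF 1 1 1).IsRoot z) :
    z^6 - 14*z^5 + 23*z^4 - 23*z^2 + 14*z - 1 = 0 := by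
  have hdet : (z • (1 : Matrix (Fin (3+1+1+1)) (Fin (3+1+1+1)) ℂ) - McF).det = 0 := by
    rw [← eval_charpoly_gen McF z]
    exact hz
  obtain ⟨v, hv0, hv⟩ := Matrix.exists_mulVec_eq_zero_iff.mpr hdet
  have hMv : McF *ᵥ v = z • v := by
    have h3 : (z • (1 : Matrix (Fin (3+1+1+1)) (Fin (3+1+1+1)) ℂ) - McF) *ᵥ v
        = z • v - McF *ᵥ v := by
      rw [Matrix.sub_mulVec, Matrix.smul_mulVec, Matrix.one_mulVec]
    rw [h3] at hv
    exact (sub_eq_zero.mp hv).symm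
  have hpow : ∀ k, (McF^k) *ᵥ v = z^k • v := by
    intro k
    induction k with
    | zero => simp [Matrix.one_mulVec]
    | succ k ih =>
      rw [pow_succ, ← Matrix.mulVec_mulVec, hMv, Matrix.mulVec_smul, ih, smul_smul, pow_succ,
        mul_comm]
  have happ : (McF^6 + (23:ℤ) • McF^4 + (14:ℤ) • McF) *ᵥ v
      = ((14:ℤ) • McF^5 + (23:ℤ) • McF^2 + 1) *ᵥ v := by rw [hannC]
  rw [Matrix.add_mulVec, Matrix.add_mulVec, Matrix.add_mulVec, Matrix.add_mulVec,
    Matrix.smul_mulVec, Matrix.smul_mulVec, Matrix.smul_mulVec,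
    Matrix.smul_mulVec, Matrix.one_mulVec, hpow 6, hpow 5, hpow 4, hpow 2, hMv] at happ
  obtain ⟨i, hi⟩ := Function.ne_iff.mp hv0
  have h := congrFun happ i
  simp only [Pi.add_apply, Pi.smul_apply] at h
  simp only [smul_eq_mul, zsmul_eq_mul] at h
  have hkey : (z^6 - 14*z^5 + 23*z^4 - 23*z^2 + 14*z - 1) * v i = 0 := by
    push_cast at h
    linear_combination h
  rcases mul_eq_zero.mp hkey with h' | h'
  · exact h'
  · exact absurd h' hi

/-- If `ρ` is the spectral radius of `F_{1,1,1}` (the maximum modulus of the complex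
roots of its characteristic polynomial), then `ρ` is a real root of
`t⁴ − 14t³ + 24t² − 14t + 1` and `12 < ρ < 13`. -/
theorem specRad_F111 (ρ : ℝ)
    (hmem : ∃ z : ℂ, (cpF 1 1 1).IsRoot z ∧ ‖z‖ = ρ)
    (hmax : ∀ z : ℂ, (cpF 1 1 1).IsRoot z → ‖z‖ ≤ ρ) :
    ρ ^ 4 - 14 * ρ ^ 3 + 24 * ρ ^ 2 - 14 * ρ + 1 = 0 ∧ 12 < ρ ∧ ρ < 13 := by
  obtain ⟨z, hz, habs⟩ := hmem
  have hρ0 : 0 ≤ ρ := habs ▸ norm_nonneg z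
  -- trace = sum of roots gives lower bound ρ ≥ 7/3
  have hcard : Multiset.card (cpF 1 1 1).roots = 6 := by
    rw [Polynomial.splits_iff_card_roots.mp (IsAlgClosed.splits _),
      cpF, Matrix.charpoly_natDegree_eq_dim]
    simp
  have hsum : (cpF 1 1 1).roots.sum = 14 := by
    have h := Matrix.trace_eq_sum_roots_charpoly McF
    rw [trace_McF] at h
    exact h.symm
  have habs_sum : ∀ s : Multiset ℂ, (∀ x ∈ s, ‖x‖ ≤ ρ) →
      ‖s.sum‖ ≤ (Multiset.card s : ℝ) * ρ := by
    intro s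
    induction s using Multiset.induction with
    | empty => intro _; simp
    | cons a s ih =>
      intro h
      have h1 : ‖a + s.sum‖ ≤ ‖a‖ + ‖s.sum‖ :=
        norm_add_le _ _
      have h2 := ih (fun x hx => h x (Multiset.mem_cons_of_mem hx))
      have h3 := h a (Multiset.mem_cons_self a s)
      simp only [Multiset.sum_cons, Multiset.card_cons]
      push_cast
      calc ‖a + s.sum‖ ≤ ‖a‖ + ‖s.sum‖ := h1
        _ ≤ ρ + (Multiset.card s : ℝ) * ρ := add_le_add h3 h2
        _ = ((Multiset.card s : ℝ) + 1) * ρ := by ring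
  have hρ73 : (7/3 : ℝ) ≤ ρ := by
    have h14 := habs_sum (cpF 1 1 1).roots
      (fun x hx => hmax x (Polynomial.isRoot_of_mem_roots hx))
    rw [hcard, hsum] at h14
    have he : ‖(14:ℂ)‖ = 14 := by norm_num
    rw [he] at h14
    push_cast at h14
    linarith
  -- set up sqrt 27
  set s : ℝ := Real.sqrt 27 with hs_def
  have hs2 : s^2 = 27 := Real.sq_sqrt (by norm_num)
  have hs0 : 0 ≤ s := Real.sqrt_nonneg _
  have hs_lb : 5.19 < s := by nlinarith
  have hs_ub : s < 5.2 := by nlinarith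
  have hs2C : ((s:ℂ))^2 = 27 := by exact_mod_cast hs2
  -- z satisfies the sextic, hence the factored form
  have hsex := root_sextic hz
  have hfac : (z^2 - 1) * ((z^2 - ((7+s:ℝ):ℂ)*z + 1) * (z^2 - ((7-s:ℝ):ℂ)*z + 1)) = 0 := by
    push_cast
    linear_combination hsex + (z^2 - z^4) * hs2C
  rcases mul_eq_zero.mp hfac with h1 | h1
  · -- z^2 = 1 : impossible since ρ ≥ 7/3
    exfalso
    have hρ2 : ρ^2 = 1 := by
      rw [← habs, ← norm_pow, show z^2 = 1 from by linear_combination h1, norm_one]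
    nlinarith
  rcases mul_eq_zero.mp h1 with hbig | hsmall
  swap
  · -- small factor: |z| too small
    exfalso
    have hb0 : (0:ℝ) ≤ 7 - s := by linarith
    have h2 : ρ^2 ≤ (7-s) * ρ + 1 := by
      have e1 : z^2 = ((7-s:ℝ):ℂ)*z - 1 := by linear_combination hsmall
      calc ρ^2 = ‖z^2‖ := by rw [norm_pow, habs]
        _ = ‖((7-s:ℝ):ℂ)*z - 1‖ := by rw [e1]
        _ ≤ ‖((7-s:ℝ):ℂ)*z‖ + ‖(1:ℂ)‖ := norm_sub_le _ _
        _ = (7-s) * ρ + 1 := by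
            rw [norm_mul, Complex.norm_real, Real.norm_eq_abs, abs_of_nonneg hb0, habs, norm_one]
    nlinarith
  -- big factor
  have hconj : ((starRingEnd ℂ) z)^2 - ((7+s:ℝ):ℂ) * ((starRingEnd ℂ) z) + 1 = 0 := by
    have h := congrArg (starRingEnd ℂ) hbig
    simpa [map_sub, map_add, _root_.map_mul, map_pow, map_ofNat, Complex.conj_ofReal] using h
  by_cases hzr : (starRingEnd ℂ) z = z
  · -- z is real
    obtain hre := Complex.conj_eq_iff_re.mp hzr
    set x : ℝ := z.re with hx_def
    have hxC : (x:ℂ)^2 - ((7+s:ℝ):ℂ)*(x:ℂ) + 1 = 0 := by rw [hre]; exact_mod_cast hbig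
    have hxR : x^2 - (7+s)*x + 1 = 0 := by exact_mod_cast hxC
    have hax : |x| = ρ := by rw [← habs, ← hre, Complex.norm_real, Real.norm_eq_abs]
    have hρq : ρ^2 - (7+s)*ρ + 1 = 0 := by
      rcases abs_cases x with ⟨h, _⟩ | ⟨h, _⟩
      · have hx_eq : x = ρ := by rw [← h, hax]
        rw [← hx_eq]; exact hxR
      · have hx_eq : x = -ρ := by
          have : -x = ρ := by rw [← h, hax]
          linarith
        exact absurd hxR (by rw [hx_eq]; nlinarith)
    have ha : (7+s)^2 - 14*(7+s) + 22 = 0 := by linear_combination hs2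
    refine ⟨?_, ?_, ?_⟩
    · linear_combination (ρ^2 - (14 - (7+s))*ρ + 1) * hρq + ρ^2 * ha
    · by_contra hle
      push_neg at hle
      nlinarith
    · nlinarith
  · -- z nonreal: |z|^2 = 1, contradiction
    exfalso
    set w := (starRingEnd ℂ) z with hw
    have hd : (z - w) * (z + w - ((7+s:ℝ):ℂ)) = 0 := by linear_combination hbig - hconj
    have hzw1 : z + w - ((7+s:ℝ):ℂ) = 0 := by
      rcases mul_eq_zero.mp hd with h | h
      · exact absurd (sub_eq_zero.mp h).symm hzr
      · exact h
    have hprod : z * w = 1 := by linear_combination z * hzw1 - hbig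
    have h2 : (Complex.normSq z : ℂ) = 1 := by rw [← Complex.mul_conj]; exact hprod
    have h3 : Complex.normSq z = 1 := by exact_mod_cast h2
    have hρ2 : ρ^2 = 1 := by rw [← habs, Complex.sq_norm]; exact h3
    nlinarith
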